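/- Let Γ be a countable group acting freely on a measure space (X, μ) by measurable, measure-preserving bijections, let F be a measurable strict fundamental domain with μ(F) < ∞, and let χ : X → Γ be its measurable retract. Let ρ and ρ' be two right actions of a group Λ on X, each by measurable, measure-preserving bijections and each commuting with the Γ-action. Let c : Γ^{n+1} → ℝ be bounded and Γ-invariant, and write T_ρ c and T_{ρ'} c for the corresponding transfer cochains. Then for all λ₀,…,λ_n ∈ Λ, writing D = {x ∈ F : ρ(λᵢ)(x) ≠ ρ'(λᵢ)(x) for some 0 ≤ i ≤ n} and assuming D is measurable, one has |T_ρ c(λ₀,…,λ_n) − T_{ρ'} c(λ₀,…,λ_n)| ≤ 2 · (sup|c|) · μ(D). -/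

import Mathlib

open MeasureTheory

/-- for two right `Λ`-actions `ρ, ρ'` on the same coupling and a bounded
`Γ`-invariant cochain `c : Γ^{n+1} → ℝ`, the transfer cochains satisfy
`|T_ρ c(λ₀,…,λ_n) − T_{ρ'} c(λ₀,…,λ_n)| ≤ 2 · sup|c| · μ(D)`, where
`D = {x ∈ F : ρ(λᵢ)(x) ≠ ρ'(λᵢ)(x) for some i}` (assumed measurable). -/
theorem stmt16 {Γ Λ X : Type*} [Group Γ] [Countable Γ]
    [MeasurableSpace Γ] [MeasurableSingletonClass Γ]
    [Group Λ] [MulAction Γ X] [MeasurableSpace X] (μ : Measure X)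
    (hΓmeas : ∀ γ : Γ, Measurable fun x : X => γ • x)
    (hΓpres : ∀ γ : Γ, MeasurePreserving (fun x : X => γ • x) μ μ)
    (hfree : ∀ (γ : Γ) (x : X), γ • x = x → γ = 1)
    (F : Set X) (hFmeas : MeasurableSet F) (hFfin : μ F < ⊤)
    (hF : ∀ x : X, ∃! y : X, y ∈ F ∧ ∃ γ : Γ, γ • x = y)
    (χ : X → Γ) (hχmeas : Measurable χ)
    (hχeq : ∀ (γ : Γ) (x : X), χ (γ • x) = γ * χ x) (hχF : ∀ y ∈ F, χ y = 1)
    (ρ ρ' : X → Λ → X)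
    (hρ_one : ∀ x : X, ρ x 1 = x)
    (hρ_mul : ∀ (x : X) (l m : Λ), ρ x (l * m) = ρ (ρ x l) m)
    (hρ'_one : ∀ x : X, ρ' x 1 = x)
    (hρ'_mul : ∀ (x : X) (l m : Λ), ρ' x (l * m) = ρ' (ρ' x l) m)
    (hρmeas : ∀ l : Λ, Measurable fun x : X => ρ x l)
    (hρ'meas : ∀ l : Λ, Measurable fun x : X => ρ' x l)
    (hρpres : ∀ l : Λ, MeasurePreserving (fun x : X => ρ x l) μ μ)
    (hρ'pres : ∀ l : Λ, MeasurePreserving (fun x : X => ρ' x l) μ μ)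
    (hcomm : ∀ (γ : Γ) (x : X) (l : Λ), ρ (γ • x) l = γ • ρ x l)
    (hcomm' : ∀ (γ : Γ) (x : X) (l : Λ), ρ' (γ • x) l = γ • ρ' x l)
    (n : ℕ) (c : (Fin (n + 1) → Γ) → ℝ)
    (hcbdd : BddAbove (Set.range fun f : Fin (n + 1) → Γ => |c f|))
    (hcinv : ∀ (γ : Γ) (f : Fin (n + 1) → Γ), c (fun j => γ * f j) = c f) :
    ∀ f : Fin (n + 1) → Λ,
      MeasurableSet {x | x ∈ F ∧ ∃ i : Fin (n + 1), ρ x (f i) ≠ ρ' x (f i)} →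
      |(∫ x in F, c (fun j => χ (ρ x (f j))) ∂μ) -
          ∫ x in F, c (fun j => χ (ρ' x (f j))) ∂μ| ≤
        2 * (⨆ f' : Fin (n + 1) → Γ, |c f'|) *
          (μ {x | x ∈ F ∧ ∃ i : Fin (n + 1), ρ x (f i) ≠ ρ' x (f i)}).toReal := by

  intro f hD
  set D := {x | x ∈ F ∧ ∃ i : Fin (n + 1), ρ x (f i) ≠ ρ' x (f i)} with hDdef
  set M := ⨆ f' : Fin (n + 1) → Γ, |c f'| with hMdef
  have hM : ∀ f' : Fin (n + 1) → Γ, |c f'| ≤ M := fun f' => le_ciSup hcbdd f'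
  have hDF : D ⊆ F := fun x hx => hx.1
  have hDfin : μ D < ⊤ := lt_of_le_of_lt (measure_mono hDF) hFfin
  set g : X → ℝ := fun x => c fun j => χ (ρ x (f j)) with hgdef
  set g' : X → ℝ := fun x => c fun j => χ (ρ' x (f j)) with hg'def
  have hg_meas : Measurable g := by
    exact (measurable_of_countable c).comp
      (measurable_pi_lambda _ fun j => hχmeas.comp (hρmeas (f j)))
  have hg'_meas : Measurable g' := by
    exact (measurable_of_countable c).comp
      (measurable_pi_lambda _ fun j => hχmeas.comp (hρ'meas (f j)))
  have hint : IntegrableOn g F μ := by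
    apply Measure.integrableOn_of_bounded hFfin.ne hg_meas.aestronglyMeasurable
    exact ae_of_all _ fun x => by simpa [Real.norm_eq_abs] using hM _
  have hint' : IntegrableOn g' F μ := by
    apply Measure.integrableOn_of_bounded hFfin.ne hg'_meas.aestronglyMeasurable
    exact ae_of_all _ fun x => by simpa [Real.norm_eq_abs] using hM _
  have hsub : (∫ x in F, g x ∂μ) - ∫ x in F, g' x ∂μ = ∫ x in F, (g x - g' x) ∂μ :=
    (integral_sub hint hint').symm
  have hFeq : F = D ∪ (F \ D) := by
    ext x
    constructor
    · intro hx
      by_cases h : x ∈ D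
      · exact Or.inl h
      · exact Or.inr ⟨hx, h⟩
    · rintro (h | h)
      · exact hDF h
      · exact h.1
  have hzero : ∫ x in F \ D, (g x - g' x) ∂μ = 0 := by
    apply setIntegral_eq_zero_of_forall_eq_zero
    intro x hx
    have heq : ∀ i : Fin (n + 1), ρ x (f i) = ρ' x (f i) := by
      intro i
      by_contra h
      exact hx.2 ⟨hx.1, i, h⟩
    simp only [hgdef, hg'def, heq]
    ring
  have hsplit : ∫ x in F, (g x - g' x) ∂μ = ∫ x in D, (g x - g' x) ∂μ := by
    have hintsub : IntegrableOn (fun x => g x - g' x) F μ := hint.sub hint'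
    rw [hFeq, setIntegral_union Set.disjoint_sdiff_right (hFmeas.diff hD)
      (hintsub.mono_set (by rw [← hFeq] at *; exact fun x h => hDF h))
      (hintsub.mono_set (fun x h => h.1)), hzero, add_zero]
  rw [hsub, hsplit]
  have hbound : ∀ x ∈ D, ‖g x - g' x‖ ≤ 2 * M := by
    intro x _
    calc ‖g x - g' x‖ ≤ ‖g x‖ + ‖g' x‖ := norm_sub_le _ _
      _ ≤ M + M := add_le_add (by simpa [Real.norm_eq_abs] using hM _)
          (by simpa [Real.norm_eq_abs] using hM _)
      _ = 2 * M := by ring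
  calc |∫ x in D, (g x - g' x) ∂μ| ≤ 2 * M * (μ D).toReal := by
        simpa [Real.norm_eq_abs, Measure.real] using
          norm_setIntegral_le_of_norm_le_const hDfin hbound
    _ = 2 * M * (μ D).toReal := rfl
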